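/- (Ahlswede's robustification) Let $\mathcal{S}$ be a finite set and $n$ a positive integer. Suppose $f:\mathcal{S}^n\to[0,1]$ satisfies $\sum_{s^n\in\mathcal{S}^n} f(s^n)\, q(s_1)\cdots q(s_n) \geq 1-\varepsilon$ for every type $q\in\mathcal{P}_0^n(\mathcal{S})$ and some $\varepsilon\in[0,1]$. Then for every $s^n\in\mathcal{S}^n$, $\frac{1}{n!}\sum_{\pi\in\Pi_n} f(\pi(s^n)) \geq 1 - 3(n+1)^{|\mathcal{S}|}\varepsilon$. -/

import Mathlib

open scoped BigOperators

open Finset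

set_option linter.unusedSectionVars false

section Aux

lemma fact_add_le' (m k : ℕ) : (m + k).factorial ≤ m.factorial * (m + k) ^ k := by
  induction k with
  | zero => simp
  | succ k ih =>
    have h1 : (m + (k+1)).factorial = (m + k + 1) * (m + k).factorial := by
      rw [← Nat.add_assoc]; exact Nat.factorial_succ _
    calc (m + (k+1)).factorial = (m + k + 1) * (m + k).factorial := h1
      _ ≤ (m + k + 1) * (m.factorial * (m + k) ^ k) := Nat.mul_le_mul_left _ ih
      _ ≤ (m + k + 1) * (m.factorial * (m + k + 1) ^ k) :=
          Nat.mul_le_mul_left _ (Nat.mul_le_mul_left _ (Nat.pow_le_pow_left (Nat.le_succ _) k))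
      _ = m.factorial * (m + (k+1)) ^ (k+1) := by ring

lemma keyD (N m : ℕ) : N.factorial * N ^ m ≤ m.factorial * N ^ N := by
  rcases Nat.le_total m N with h | h
  · obtain ⟨k, rfl⟩ := Nat.exists_eq_add_of_le h
    calc (m + k).factorial * (m + k) ^ m ≤ (m.factorial * (m + k) ^ k) * (m + k) ^ m :=
        Nat.mul_le_mul_right _ (fact_add_le' m k)
      _ = m.factorial * (m + k) ^ (m + k) := by rw [mul_assoc, ← pow_add, Nat.add_comm k m]
  · obtain ⟨k, rfl⟩ := Nat.exists_eq_add_of_le h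
    have h2 : N.factorial * N ^ k ≤ (N + k).factorial := by
      calc N.factorial * N ^ k ≤ N.factorial * (N+1) ^ k :=
          Nat.mul_le_mul_left _ (Nat.pow_le_pow_left (Nat.le_succ _) k)
        _ ≤ (N + k).factorial := Nat.factorial_mul_pow_le_factorial
    calc N.factorial * N ^ (N + k) = (N.factorial * N ^ k) * N ^ N := by
          rw [mul_assoc, ← pow_add, Nat.add_comm k N]
      _ ≤ ((N + k).factorial) * N ^ N := Nat.mul_le_mul_right _ h2

variable {S : Type*} [Fintype S] [DecidableEq S] {n : ℕ}

def cnt (t : Fin n → S) (a : S) : ℕ := (univ.filter fun j => t j = a).card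

lemma cnt_card (t : Fin n → S) (a : S) : Fintype.card {i // t i = a} = cnt t a :=
  Fintype.card_subtype _

lemma cnt_comp (t : Fin n → S) (π : Equiv.Perm (Fin n)) (a : S) :
    cnt (fun i => t (π i)) a = cnt t a := by
  rw [← cnt_card, ← cnt_card]
  exact Fintype.card_congr (π.subtypeEquiv fun i => Iff.rfl)

lemma sum_cnt (t : Fin n → S) : ∑ a, cnt t a = n := by
  have := Finset.card_eq_sum_card_fiberwise (f := t) (s := univ) (t := univ)
    (fun x _ => mem_univ _)
  simpa [cnt] using this.symm

lemma prod_pow_cnt (g : S → ℝ) (t : Fin n → S) : ∏ i, g (t i) = ∏ a, g a ^ cnt t a := by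
  rw [← Finset.prod_fiberwise_of_maps_to (t := univ) (fun i _ => mem_univ (t i))
    (fun i => g (t i))]
  refine Finset.prod_congr rfl fun a _ => ?_
  rw [Finset.prod_congr rfl (fun i hi => by rw [(mem_filter.mp hi).2]), Finset.prod_const]
  rfl

def fiber_equiv (t0 t : Fin n → S) :
    {π : Equiv.Perm (Fin n) // (fun i => t0 (π i)) = t} ≃
      (∀ a : S, ({i // t i = a} ≃ {i // t0 i = a})) where
  toFun := fun ⟨π, hπ⟩ a =>
    (π : Fin n ≃ Fin n).subtypeEquiv fun i => by
      rw [show t0 (π i) = t i from congrFun hπ i]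
  invFun := fun e =>
    ⟨(Equiv.sigmaFiberEquiv t).symm.trans
      ((Equiv.sigmaCongrRight e).trans (Equiv.sigmaFiberEquiv t0)),
     funext fun i => (e (t i) ⟨i, rfl⟩).2⟩
  left_inv := fun ⟨π, hπ⟩ => by
    apply Subtype.ext; apply Equiv.ext; intro i; rfl
  right_inv := fun e => by
    funext a; apply Equiv.ext; rintro ⟨i, rfl⟩; apply Subtype.ext; rfl

lemma card_fiber (t0 t : Fin n → S) (h : ∀ a, cnt t a = cnt t0 a) :
    (univ.filter fun π : Equiv.Perm (Fin n) => (fun i => t0 (π i)) = t).card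
      = ∏ a, (cnt t0 a).factorial := by
  rw [← Fintype.card_subtype]
  rw [Fintype.card_congr (fiber_equiv t0 t), Fintype.card_pi]
  refine Finset.prod_congr rfl fun a _ => ?_
  rw [Fintype.card_equiv (Fintype.equivOfCardEq (by rw [cnt_card, cnt_card, h a]))]
  rw [cnt_card, h a]

lemma class_card (t0 : Fin n → S) :
    (univ.filter fun t : Fin n → S => ∀ a, cnt t a = cnt t0 a).card
      * ∏ a, (cnt t0 a).factorial = n.factorial := by
  have h1 : (Fintype.card (Equiv.Perm (Fin n))) = n.factorial := by
    simp [Fintype.card_perm]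
  rw [← h1, ← Finset.card_univ]
  rw [Finset.card_eq_sum_card_fiberwise
    (f := fun π : Equiv.Perm (Fin n) => fun i => t0 (π i))
    (t := univ.filter fun t : Fin n → S => ∀ a, cnt t a = cnt t0 a)
    (fun π _ => mem_filter.mpr ⟨mem_univ _, fun a => cnt_comp t0 π a⟩)]
  rw [Finset.sum_congr rfl fun t ht => card_fiber t0 t (mem_filter.mp ht).2]
  rw [Finset.sum_const, smul_eq_mul]

lemma class_sum (t0 : Fin n → S) (f : (Fin n → S) → ℝ) :
    ∑ π : Equiv.Perm (Fin n), f (fun i => t0 (π i))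
      = (∏ a, (cnt t0 a).factorial : ℕ) *
        ∑ t ∈ univ.filter (fun t : Fin n → S => ∀ a, cnt t a = cnt t0 a), f t := by
  rw [← Finset.sum_fiberwise_of_maps_to
    (g := fun π : Equiv.Perm (Fin n) => fun i => t0 (π i))
    (t := univ.filter fun t : Fin n → S => ∀ a, cnt t a = cnt t0 a)
    (fun π _ => mem_filter.mpr ⟨mem_univ _, fun a => cnt_comp t0 π a⟩)
    (fun π => f (fun i => t0 (π i)))]
  rw [Finset.mul_sum]
  refine Finset.sum_congr rfl fun t ht => ?_
  rw [Finset.sum_congr rfl (fun π hπ => by rw [(mem_filter.mp hπ).2]), Finset.sum_const]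
  rw [card_fiber t0 t (mem_filter.mp ht).2]
  simp [mul_comm]

end Aux

set_option maxHeartbeats 1000000 in
/-- Ahlswede's robustification technique: if `f : S^n → [0,1]` satisfies
`∑_{s^n} f(s^n) q(s_1)⋯q(s_n) ≥ 1 - ε` for every type `q` of a length-`n` sequence
(`q(a) = N(a|t^n)/n` for some `t^n ∈ S^n`), then for every `s^n ∈ S^n`,
`(1/n!) ∑_{π ∈ Π_n} f(π(s^n)) ≥ 1 - 3(n+1)^{|S|} ε`. -/
theorem stmt2 {S : Type*} [Fintype S] [DecidableEq S] (n : ℕ) (hn : 0 < n)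
    (f : (Fin n → S) → ℝ) (hf : ∀ s, f s ∈ Set.Icc (0:ℝ) 1)
    (ε : ℝ) (hε : ε ∈ Set.Icc (0:ℝ) 1)
    (hyp : ∀ t : Fin n → S,
      ∑ s : Fin n → S,
        f s * ∏ i, ((Finset.univ.filter (fun j => t j = s i)).card : ℝ) / n
      ≥ 1 - ε) :
    ∀ s : Fin n → S,
      (1 / (n.factorial : ℝ)) * ∑ π : Equiv.Perm (Fin n), f (fun i => s (π i))
        ≥ 1 - 3 * (n + 1) ^ (Fintype.card S) * ε := by
  intro s
  obtain ⟨hε0, hε1⟩ := hε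
  set d := Fintype.card S with hd
  -- notation
  set g : S → ℝ := fun a => ((cnt s a : ℝ) / n) with hg
  set P : (Fin n → S) → ℝ := fun t => ∏ i, g (t i) with hP
  set C : Finset (Fin n → S) := univ.filter (fun t => ∀ a, cnt t a = cnt s a) with hC
  set K : ℝ := (C.card : ℝ) with hK
  set c : ℝ := ∏ a, g a ^ cnt s a with hc
  have hgnn : ∀ a, 0 ≤ g a := fun a => by positivity
  have hPnn : ∀ t, 0 ≤ P t := fun t => Finset.prod_nonneg fun i _ => hgnn _
  -- P is constant on classes
  have hPval : ∀ t : Fin n → S, P t = ∏ a, g a ^ cnt t a := fun t => prod_pow_cnt g t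
  -- total sum of P is 1
  have hgsum : ∑ a, g a = 1 := by
    have h1 : (∑ a, (cnt s a : ℝ)) = (n : ℝ) := by
      rw [← Nat.cast_sum, sum_cnt]
    rw [hg]
    rw [← Finset.sum_div, h1, div_self (by positivity)]
  have htotal : ∑ t : Fin n → S, P t = 1 := by
    calc ∑ t : Fin n → S, P t
        = ∑ t ∈ Fintype.piFinset (fun _ : Fin n => (univ : Finset S)), ∏ i, g (t i) := by
          rw [Fintype.piFinset_univ]
      _ = ∏ _i : Fin n, ∑ a, g a := (Finset.prod_univ_sum _ _).symm
      _ = 1 := by rw [hgsum]; simp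
  -- the nat inequality between class weights
  have hnat : ∀ t : Fin n → S,
      (univ.filter fun u : Fin n → S => ∀ a, cnt u a = cnt t a).card
          * ∏ a, (cnt s a) ^ (cnt t a)
        ≤ C.card * ∏ a, (cnt s a) ^ (cnt s a) := by
    intro t
    have h1 := class_card t
    have h2 := class_card s
    set Bc := (univ.filter fun u : Fin n → S => ∀ a, cnt u a = cnt t a).card
    set pm := ∏ a, (cnt t a).factorial with hpm
    set pN := ∏ a, (cnt s a).factorial with hpN
    have hkey : pN * ∏ a, (cnt s a) ^ (cnt t a) ≤ pm * ∏ a, (cnt s a) ^ (cnt s a) := by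
      rw [hpm, hpN, ← Finset.prod_mul_distrib, ← Finset.prod_mul_distrib]
      exact Finset.prod_le_prod' fun a _ => keyD (cnt s a) (cnt t a)
    have hpos : 0 < pm * pN := Nat.mul_pos (Finset.prod_pos fun a _ => Nat.factorial_pos _)
      (Finset.prod_pos fun a _ => Nat.factorial_pos _)
    refine Nat.le_of_mul_le_mul_right ?_ hpos
    calc Bc * (∏ a, cnt s a ^ cnt t a) * (pm * pN)
        = (Bc * pm) * (pN * ∏ a, cnt s a ^ cnt t a) := by ring
      _ = n.factorial * (pN * ∏ a, cnt s a ^ cnt t a) := by rw [h1]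
      _ ≤ n.factorial * (pm * ∏ a, cnt s a ^ cnt s a) := Nat.mul_le_mul_left _ hkey
      _ = (C.card * pN) * (pm * ∏ a, cnt s a ^ cnt s a) := by rw [h2]
      _ = C.card * (∏ a, cnt s a ^ cnt s a) * (pm * pN) := by ring
  -- real form: powers of g over a class
  have hn' : (0:ℝ) < n := by exact_mod_cast hn
  have hgpow : ∀ t : Fin n → S,
      ∏ a, g a ^ cnt t a = ((∏ a, (cnt s a) ^ (cnt t a) : ℕ) : ℝ) / (n : ℝ) ^ n := by
    intro t
    push_cast
    rw [hg]
    calc ∏ a, ((cnt s a : ℝ)/n) ^ cnt t a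
        = ∏ a, ((cnt s a : ℝ) ^ cnt t a / (n:ℝ) ^ cnt t a) :=
          Finset.prod_congr rfl fun a _ => div_pow _ _ _
      _ = (∏ a, (cnt s a:ℝ) ^ cnt t a) / ∏ a, (n:ℝ) ^ cnt t a := Finset.prod_div_distrib _ _
      _ = (∏ a, (cnt s a:ℝ) ^ cnt t a) / (n:ℝ) ^ n := by
          rw [Finset.prod_pow_eq_pow_sum, sum_cnt]
  have hreal : ∀ t : Fin n → S,
      ∑ u ∈ univ.filter (fun u : Fin n → S => ∀ a, cnt u a = cnt t a), P u ≤ K * c := by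
    intro t
    have hconst : ∀ u ∈ univ.filter (fun u : Fin n → S => ∀ a, cnt u a = cnt t a),
        P u = ∏ a, g a ^ cnt t a := by
      intro u hu
      rw [hPval u]
      exact Finset.prod_congr rfl fun a _ => by rw [(mem_filter.mp hu).2 a]
    rw [Finset.sum_congr rfl hconst, Finset.sum_const, nsmul_eq_mul]
    have hKc : K * c = (C.card : ℝ) * ∏ a, g a ^ cnt s a := rfl
    rw [hKc, hgpow t, hgpow s, mul_div_assoc', mul_div_assoc',
      div_le_div_iff_of_pos_right (by positivity : (0:ℝ) < (n:ℝ)^n)]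
    exact_mod_cast hnat t
  have hcnt_le : ∀ (u : Fin n → S) (a : S), cnt u a < n + 1 := by
    intro u a
    have h : cnt u a ≤ n := by
      unfold cnt
      simpa using Finset.card_filter_le (univ : Finset (Fin n)) (fun j => u j = a)
    omega
  set cntF : (Fin n → S) → (S → Fin (n+1)) := fun u a => ⟨cnt u a, hcnt_le u a⟩ with hcntF
  have hfib : ∑ m : S → Fin (n+1), ∑ u ∈ univ.filter (fun u => cntF u = m), P u
      = ∑ u : Fin n → S, P u :=
    Finset.sum_fiberwise_of_maps_to (fun u _ => mem_univ _) P
  have hcnn : 0 ≤ c := by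
    rw [hc]; exact Finset.prod_nonneg fun a _ => pow_nonneg (hgnn a) _
  have hstep : ∀ m : S → Fin (n+1), ∑ u ∈ univ.filter (fun u => cntF u = m), P u ≤ K * c := by
    intro m
    rcases Finset.eq_empty_or_nonempty (univ.filter (fun u => cntF u = m)) with he | ⟨t0, ht0⟩
    · rw [he, Finset.sum_empty]
      exact mul_nonneg (Nat.cast_nonneg _) hcnn
    · have hm : cntF t0 = m := (mem_filter.mp ht0).2
      have heq : univ.filter (fun u => cntF u = m)
          = univ.filter (fun u : Fin n → S => ∀ a, cnt u a = cnt t0 a) := by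
        refine Finset.filter_congr fun u _ => ?_
        rw [← hm]
        simp [hcntF, funext_iff, Fin.ext_iff]
      rw [heq]
      exact hreal t0
  have h1 : 1 ≤ ((n:ℝ)+1)^d * (K * c) := by
    have h2 := Finset.sum_le_card_nsmul univ _ (K * c) (fun m _ => hstep m)
    rw [hfib, htotal, Finset.card_univ, Fintype.card_fun, Fintype.card_fin,
      nsmul_eq_mul] at h2
    push_cast at h2
    exact h2
  -- use the hypothesis at t = s
  have hhyp : 1 - ε ≤ ∑ u : Fin n → S, f u * P u := by
    have h := hyp s
    simpa [hP, hg, cnt] using h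
  have hsplit := Finset.sum_filter_add_sum_filter_not univ
    (fun u : Fin n → S => ∀ a, cnt u a = cnt s a) (fun u => f u * P u)
  have hsplitP := Finset.sum_filter_add_sum_filter_not univ
    (fun u : Fin n → S => ∀ a, cnt u a = cnt s a) P
  rw [← hC] at hsplit hsplitP
  set F : ℝ := ∑ u ∈ C, f u with hF
  have hCP : ∑ u ∈ C, P u = K * c := by
    have hconst : ∀ u ∈ C, P u = c := by
      intro u hu
      rw [hPval u, hc]
      exact Finset.prod_congr rfl fun a _ => by rw [(mem_filter.mp hu).2 a]
    rw [Finset.sum_congr rfl hconst, Finset.sum_const, nsmul_eq_mul]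
  have hCf : ∑ u ∈ C, f u * P u = c * F := by
    rw [hF, Finset.mul_sum]
    refine Finset.sum_congr rfl fun u hu => ?_
    have : P u = c := by
      rw [hPval u, hc]
      exact Finset.prod_congr rfl fun a _ => by rw [(mem_filter.mp hu).2 a]
    rw [this, mul_comm]
  have hcomplP : ∑ u ∈ univ.filter (fun u : Fin n → S => ¬ ∀ a, cnt u a = cnt s a), P u
      = 1 - K * c := by
    rw [hCP] at hsplitP
    rw [htotal] at hsplitP
    linarith [hsplitP]
  have hbound : ∑ u ∈ univ.filter (fun u : Fin n → S => ¬ ∀ a, cnt u a = cnt s a), f u * P u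
      ≤ ∑ u ∈ univ.filter (fun u : Fin n → S => ¬ ∀ a, cnt u a = cnt s a), P u :=
    Finset.sum_le_sum fun u _ => mul_le_of_le_one_left (hPnn u) (hf u).2
  have h2 : K * c - ε ≤ c * F := by
    rw [hCf] at hsplit
    linarith [hhyp, hsplit, hbound, hcomplP]
  -- positivity facts
  have hKpos : 0 < K := by
    rw [hK]
    have hsC : s ∈ C := mem_filter.mpr ⟨mem_univ _, fun a => rfl⟩
    exact_mod_cast Finset.card_pos.mpr ⟨s, hsC⟩
  have hcpos : 0 < c := by
    rw [hc]
    refine Finset.prod_pos fun a _ => ?_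
    rcases Nat.eq_zero_or_pos (cnt s a) with h | h
    · rw [h, pow_zero]; norm_num
    · apply pow_pos
      rw [hg]
      exact div_pos (by exact_mod_cast h) hn'
  have hcK : 0 < c * K := mul_pos hcpos hKpos
  -- rewrite the goal
  have hKfact : K * ((∏ a, (cnt s a).factorial : ℕ) : ℝ) = (n.factorial : ℝ) := by
    rw [hK, hC]
    exact_mod_cast congrArg (Nat.cast : ℕ → ℝ) (class_card s)
  have hgoal_eq : (1 / (n.factorial : ℝ)) * ∑ π : Equiv.Perm (Fin n), f (fun i => s (π i))
      = F / K := by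
    rw [class_sum s f, ← hC, ← hF, ← hKfact]
    field_simp
  rw [ge_iff_le, hgoal_eq]
  set A : ℝ := ((n:ℝ)+1)^d with hA
  have hApos : 0 < A := by rw [hA]; positivity
  have e1 : ε / (c * K) ≤ A * ε := by
    rw [div_le_iff₀ hcK]
    calc ε = ε * 1 := (mul_one ε).symm
      _ ≤ ε * (A * (K * c)) := mul_le_mul_of_nonneg_left h1 hε0
      _ = A * ε * (c * K) := by ring
  have h3 : K - ε / c ≤ F := by
    have h4 : (K * c - ε) / c ≤ F := (div_le_iff₀ hcpos).mpr (by linarith [h2])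
    have h5 : K - ε/c = (K*c - ε)/c := by
      field_simp
    linarith [h4, h5.le, h5.ge]
  have e2 : 1 - ε / (c*K) ≤ F / K := by
    rw [le_div_iff₀ hKpos]
    have h6 : (1 - ε/(c*K)) * K = K - ε / c := by
      field_simp
    rw [h6]
    exact h3
  have e3 : A * ε ≤ 3 * A * ε := by nlinarith [mul_nonneg hApos.le hε0]
  linarith [e1, e2, e3]
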